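/- Let k be a field of characteristic different from 2, let n ≥ 2, and let a₁, …, aₙ be units of k. Let f be the polynomial ⟨⟨a₁,…,a_{n−1}⟩⟩(X₀,…,X_{2^{n−1}−1}) − aₙ·X²_{2^{n−1}} in the polynomial ring k[X₀,…,X_{2^{n−1}}]. Then f generates a prime ideal (so A := k[X₀,…,X_{2^{n−1}}]/(f) is an integral domain), and in the Milnor K-group K_n^M(L) of the fraction field L = Frac(A) the symbol {a₁,…,aₙ} is divisible by 2. (L is a purely transcendental extension of the function field k(Q_{a₁,…,aₙ}) of the norm quadric; this realizes the statement that the symbol {a₁,…,aₙ} becomes divisible by 2 over the function field of the norm quadric.) -/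

import Mathlib

open scoped TensorProduct

/-- The Steinberg submodule of the `n`-fold tensor power (over `ℤ`) of `kˣ`: the
subgroup generated by the elementary tensors `a₁ ⊗ ⋯ ⊗ aₙ` with `aᵢ + aᵢ₊₁ = 1` in `k`
for some `i`. -/
def steinbergSubmodule (k : Type*) [Field k] (n : ℕ) :
    Submodule ℤ (⨂[ℤ]^n (Additive kˣ)) :=
  Submodule.span ℤ
    { x | ∃ (u : Fin n → kˣ) (i j : Fin n), (i : ℕ) + 1 = (j : ℕ) ∧
        ((u i : k) + (u j : k) = 1) ∧
        x = PiTensorProduct.tprod ℤ (fun t => Additive.ofMul (u t)) }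

/-- The `n`-th Milnor K-group `K_n^M(k)`: the quotient of the `n`-fold tensor power over `ℤ`
of the multiplicative group `kˣ` by the Steinberg relations. -/
def MilnorKGroup (k : Type*) [Field k] (n : ℕ) :=
  (⨂[ℤ]^n (Additive kˣ)) ⧸ steinbergSubmodule k n

noncomputable instance (k : Type*) [Field k] (n : ℕ) : AddCommGroup (MilnorKGroup k n) :=
  Submodule.Quotient.addCommGroup _

/-- The Milnor symbol `{a₁,…,aₙ} ∈ K_n^M(k)`. -/
noncomputable def milnorSymbol {k : Type*} [Field k] {n : ℕ} (u : Fin n → kˣ) : MilnorKGroup k n :=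
  Submodule.Quotient.mk (PiTensorProduct.tprod ℤ (fun t => Additive.ofMul (u t)))

/-- The coefficient of the Pfister form `⟨⟨a₁,…,aₙ⟩⟩` at the variable indexed by
`S : Fin n → Bool`. -/
def pfisterCoeff {k : Type*} [Field k] (n : ℕ) (a : Fin n → k) (S : Fin n → Bool) : k :=
  ∏ i ∈ Finset.univ.filter (fun i => S i = true), (-(a i))

/-- The `n`-fold Pfister form `⟨⟨a₁,…,aₙ⟩⟩`, a diagonal quadratic form in `2ⁿ` variables
indexed by `Fin n → Bool`. -/
def pfisterForm {k : Type*} [Field k] (n : ℕ) (a : Fin n → k)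
    (x : (Fin n → Bool) → k) : k :=
  ∑ S : Fin n → Bool, pfisterCoeff n a S * x S ^ 2


section KTheory

variable {K : Type*} [Field K] {n : ℕ}

-- quotient mk as additive hom
lemma milnorSymbol_def (u : Fin n → Kˣ) :
    milnorSymbol u = Submodule.Quotient.mk
      (PiTensorProduct.tprod ℤ (fun t => Additive.ofMul (u t))) := rfl

lemma ofMul_comp_update (u : Fin n → Kˣ) (i : Fin n) (z : Kˣ) :
    (fun t => Additive.ofMul (Function.update u i z t)) =
      Function.update (fun t => Additive.ofMul (u t)) i (Additive.ofMul z) := by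
  funext t
  by_cases h : t = i
  · subst h; simp
  · simp [Function.update_of_ne h]

/-- multilinearity of the symbol in each slot -/
lemma milnorSymbol_update_mul (u : Fin n → Kˣ) (i : Fin n) (x y : Kˣ) :
    milnorSymbol (Function.update u i (x * y)) =
      milnorSymbol (Function.update u i x) + milnorSymbol (Function.update u i y) := by
  simp only [milnorSymbol_def, ofMul_comp_update]
  rw [show Additive.ofMul (x * y) = Additive.ofMul x + Additive.ofMul y from rfl,
    MultilinearMap.map_update_add]
  rfl

lemma milnorSymbol_eq_zero_of_eq_one (u : Fin n → Kˣ) (i : Fin n) (h : u i = 1) :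
    milnorSymbol u = 0 := by
  have h0 : (fun t => Additive.ofMul (u t)) i = 0 := by
    show Additive.ofMul (u i) = 0
    rw [h]; rfl
  have := MultilinearMap.map_coord_zero
    (PiTensorProduct.tprod ℤ (s := fun _ : Fin n => Additive Kˣ))
    (m := fun t => Additive.ofMul (u t)) i h0
  rw [milnorSymbol_def, this]
  rfl

lemma milnorSymbol_steinberg (u : Fin n → Kˣ) (i j : Fin n)
    (hij : (i : ℕ) + 1 = (j : ℕ)) (h : (u i : K) + (u j : K) = 1) :
    milnorSymbol u = 0 := by
  rw [milnorSymbol_def]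
  refine (Submodule.Quotient.mk_eq_zero (steinbergSubmodule K n)).2 ?_
  exact Submodule.subset_span ⟨u, i, j, hij, h, rfl⟩

end KTheory

section KTheory2

variable {K : Type*} [Field K] {n : ℕ}

noncomputable instance (k : Type*) [Field k] (n : ℕ) : Module ℤ (MilnorKGroup k n) :=
  Submodule.Quotient.module _

lemma ofMul_comp_snoc (u : Fin n → Kˣ) (w : Kˣ) :
    (fun t => Additive.ofMul ((Fin.snoc u w : Fin (n+1) → Kˣ) t)) =
      Fin.snoc (fun t => Additive.ofMul (u t)) (Additive.ofMul w) := by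
  funext t
  refine Fin.lastCases ?_ ?_ t
  · simp
  · intro i; simp

/-- the multilinear map `v ↦ v ⊗ w` into the `(n+1)`-fold tensor power -/
noncomputable def appendAux (w : Kˣ) :
    MultilinearMap ℤ (fun _ : Fin n => Additive Kˣ) (⨂[ℤ]^(n+1) (Additive Kˣ)) :=
  (LinearMap.applyₗ (Additive.ofMul w)).compMultilinearMap
    ((PiTensorProduct.tprod ℤ (s := fun _ : Fin (n+1) => Additive Kˣ)).curryRight)

lemma appendAux_apply (w : Kˣ) (v : Fin n → Additive Kˣ) :
    appendAux w v = PiTensorProduct.tprod ℤ (Fin.snoc v (Additive.ofMul w)) := by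
  simp [appendAux, MultilinearMap.curryRight_apply]

noncomputable def appendHom (w : Kˣ) : MilnorKGroup K n →ₗ[ℤ] MilnorKGroup K (n+1) :=
  Submodule.mapQ (steinbergSubmodule K n) (steinbergSubmodule K (n+1))
    (PiTensorProduct.lift (appendAux w)) (by
      rw [steinbergSubmodule, Submodule.span_le]
      rintro x ⟨u, i, j, hij, h, rfl⟩
      simp only [SetLike.mem_coe, Submodule.mem_comap, PiTensorProduct.lift.tprod,
        appendAux_apply]
      rw [← ofMul_comp_snoc]
      exact Submodule.subset_span ⟨Fin.snoc u w, i.castSucc, j.castSucc, by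
        simpa using hij, by simpa using h, rfl⟩)

lemma appendHom_symbol (w : Kˣ) (u : Fin n → Kˣ) :
    appendHom w (milnorSymbol u) = milnorSymbol (Fin.snoc u w) := by
  rw [milnorSymbol_def, milnorSymbol_def]
  erw [Submodule.mapQ_apply]
  rw [PiTensorProduct.lift.tprod, appendAux_apply, ← ofMul_comp_snoc]

end KTheory2

section KTheory3

variable {K : Type*} [Field K] {n : ℕ}

lemma milnorSymbol_snoc_mul (c : Fin n → Kˣ) (x y : Kˣ) :
    milnorSymbol (Fin.snoc c (x * y)) =
      milnorSymbol (Fin.snoc c x) + milnorSymbol (Fin.snoc c y) := by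
  have h := milnorSymbol_update_mul (Fin.snoc c x) (Fin.last n) x y
  simpa [Fin.update_snoc_last] using h

lemma milnorSymbol_snoc_one (c : Fin n → Kˣ) :
    milnorSymbol (Fin.snoc c (1 : Kˣ)) = 0 :=
  milnorSymbol_eq_zero_of_eq_one _ (Fin.last n) (by simp)

lemma milnorSymbol_snoc_inv (c : Fin n → Kˣ) (x : Kˣ) :
    milnorSymbol (Fin.snoc c x⁻¹) = - milnorSymbol (Fin.snoc c x) := by
  have h := milnorSymbol_snoc_mul c x x⁻¹
  rw [mul_inv_cancel, milnorSymbol_snoc_one] at h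
  exact eq_neg_of_add_eq_zero_right h.symm

lemma milnorSymbol_snoc2_mul (c : Fin n → Kˣ) (b x y : Kˣ) :
    milnorSymbol (Fin.snoc (Fin.snoc c (x * y)) b) =
      milnorSymbol (Fin.snoc (Fin.snoc c x) b) +
        milnorSymbol (Fin.snoc (Fin.snoc c y) b) := by
  have h := milnorSymbol_update_mul (Fin.snoc (Fin.snoc c x) b) ((Fin.last n).castSucc) x y
  simpa [← Fin.snoc_update, Fin.update_snoc_last] using h

lemma milnorSymbol_snoc2_inv (c : Fin n → Kˣ) (b x : Kˣ) :
    milnorSymbol (Fin.snoc (Fin.snoc c x⁻¹) b) =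
      - milnorSymbol (Fin.snoc (Fin.snoc c x) b) := by
  have h := milnorSymbol_snoc2_mul c b x x⁻¹
  rw [mul_inv_cancel] at h
  have h1 : milnorSymbol (Fin.snoc (Fin.snoc c (1:Kˣ)) b) = 0 :=
    milnorSymbol_eq_zero_of_eq_one _ ((Fin.last n).castSucc) (by simp)
  rw [h1] at h
  exact eq_neg_of_add_eq_zero_right h.symm

lemma milnorSymbol_snoc_steinberg (c : Fin n → Kˣ) (x y : Kˣ)
    (h : (x : K) + (y : K) = 1) :
    milnorSymbol (Fin.snoc (Fin.snoc c x) y) = 0 := by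
  refine milnorSymbol_steinberg _ ((Fin.last n).castSucc) (Fin.last (n+1)) (by simp) ?_
  rw [show (Fin.snoc (Fin.snoc c x) y : Fin (n+2) → Kˣ) (Fin.last (n+1)) = y by simp,
    show (Fin.snoc (Fin.snoc c x) y : Fin (n+2) → Kˣ) ((Fin.last n).castSucc) = x by simp]
  exact h

lemma milnorSymbol_snoc_neg_self (c : Fin n → Kˣ) (x : Kˣ) :
    milnorSymbol (Fin.snoc (Fin.snoc c x) (-x)) = 0 := by
  by_cases hx : x = 1
  · exact milnorSymbol_eq_zero_of_eq_one _ ((Fin.last n).castSucc) (by simp [hx])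
  · have hx0 : (x : K) ≠ 0 := x.ne_zero
    have hx1 : (x : K) ≠ 1 := fun h => hx (Units.ext h)
    have h1 : (1 : K) - (x : K) ≠ 0 := sub_ne_zero.2 (Ne.symm hx1)
    have h2 : (1 : K) - ((x⁻¹ : Kˣ) : K) ≠ 0 := by
      rw [Units.val_inv_eq_inv_val, sub_ne_zero]
      intro h
      exact hx1 (by rw [← inv_inv (x:K), ← h, inv_one])
    set w₁ : Kˣ := Units.mk0 _ h1
    set w₂ : Kˣ := Units.mk0 _ h2
    have key' : (-x) * w₂ = w₁ := by
      ext
      simp only [Units.val_mul, Units.val_neg, w₁, w₂, Units.val_mk0,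
        Units.val_inv_eq_inv_val]
      field_simp
      ring
    have key : -x = w₁ * w₂⁻¹ := by rw [← key', mul_inv_cancel_right]
    rw [key, milnorSymbol_snoc_mul]
    have e1 : milnorSymbol (Fin.snoc (Fin.snoc c x) w₁) = 0 :=
      milnorSymbol_snoc_steinberg c x w₁ (by simp [w₁])
    have e2 : milnorSymbol (Fin.snoc (Fin.snoc c x) w₂⁻¹) = 0 := by
      rw [milnorSymbol_snoc_inv]
      have : milnorSymbol (Fin.snoc (Fin.snoc c x) w₂) = 0 := by
        rw [show x = (x⁻¹)⁻¹ by simp, milnorSymbol_snoc2_inv]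
        rw [milnorSymbol_snoc_steinberg c x⁻¹ w₂ (by simp [w₂]), neg_zero]
      rw [this, neg_zero]
    rw [e1, e2, add_zero]

lemma milnorSymbol_snoc_swap (c : Fin n → Kˣ) (x y : Kˣ) :
    milnorSymbol (Fin.snoc (Fin.snoc c x) y) =
      - milnorSymbol (Fin.snoc (Fin.snoc c y) x) := by
  have h0 := milnorSymbol_snoc_neg_self c (x * y)
  rw [milnorSymbol_snoc2_mul] at h0
  have e1 : milnorSymbol (Fin.snoc (Fin.snoc c x) (-(x*y))) =
      milnorSymbol (Fin.snoc (Fin.snoc c x) y) := by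
    rw [show -(x*y) = (-x) * y by rw [neg_mul], milnorSymbol_snoc_mul,
      milnorSymbol_snoc_neg_self, zero_add]
  have e2 : milnorSymbol (Fin.snoc (Fin.snoc c y) (-(x*y))) =
      milnorSymbol (Fin.snoc (Fin.snoc c y) x) := by
    rw [show -(x*y) = (-y) * x by rw [neg_mul, mul_comm], milnorSymbol_snoc_mul,
      milnorSymbol_snoc_neg_self, zero_add]
  rw [e1, e2] at h0
  exact eq_neg_of_add_eq_zero_left h0

end KTheory3

section Main

variable {K : Type*} [Field K]

lemma pfisterCoeff_snoc (r : ℕ) (a : Fin (r+1) → K) (T : Fin r → Bool) (v : Bool) :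
    pfisterCoeff (r+1) a (Fin.snoc T v) =
      (if v then -a (Fin.last r) else 1) * pfisterCoeff r (fun i => a i.castSucc) T := by
  unfold pfisterCoeff
  rw [Finset.prod_filter, Finset.prod_filter, Fin.prod_univ_castSucc]
  simp only [Fin.snoc_castSucc, Fin.snoc_last]
  rw [mul_comm]

def snocBoolEquiv (r : ℕ) : ((Fin r → Bool) × Bool) ≃ (Fin (r+1) → Bool) where
  toFun p := Fin.snoc p.1 p.2
  invFun S := (fun i => S i.castSucc, S (Fin.last r))
  left_inv p := by
    ext i
    · simp
    · simp
  right_inv S := Fin.snoc_init_self S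

lemma represented_symbol_div_two :
    ∀ (r : ℕ) (c : Fin r → Kˣ) (b : Kˣ) (x : (Fin r → Bool) → K),
      (b : K) = ∑ S : Fin r → Bool, pfisterCoeff r (fun i => (c i : K)) S * x S ^ 2 →
      ∃ z : MilnorKGroup K (r + 1), milnorSymbol (Fin.snoc c b) = 2 • z := by
  intro r
  induction r with
  | zero =>
    intro c b x hb
    have hcoeff : ∀ S, pfisterCoeff 0 (fun i => (c i : K)) S = 1 := by
      intro S; unfold pfisterCoeff; simp
    have huniv : (Finset.univ : Finset (Fin 0 → Bool)) = {fun _ => false} :=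
      Finset.eq_singleton_iff_unique_mem.mpr
        ⟨Finset.mem_univ _, fun y _ => funext fun i => i.elim0⟩
    rw [huniv, Finset.sum_singleton, hcoeff, one_mul] at hb
    have hx0 : x (fun _ => false) ≠ 0 := by
      intro h; rw [h] at hb; simp at hb
    set ξ : Kˣ := Units.mk0 _ hx0
    have hbξ : b = ξ * ξ := by
      ext; rw [Units.val_mul]; simpa [ξ, ← sq] using hb
    refine ⟨milnorSymbol (Fin.snoc c ξ), ?_⟩
    rw [hbξ, milnorSymbol_snoc_mul, two_smul]
  | succ r IH =>
    intro c b x hb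
    obtain ⟨c', cr, rfl⟩ : ∃ c' cr, c = Fin.snoc c' cr :=
      ⟨Fin.init c, c (Fin.last r), (Fin.snoc_init_self c).symm⟩
    -- rewrite the sum
    set C : K := ∑ T : Fin r → Bool,
      pfisterCoeff r (fun i => (c' i : K)) T * x (Fin.snoc T false) ^ 2 with hC
    set D : K := ∑ T : Fin r → Bool,
      pfisterCoeff r (fun i => (c' i : K)) T * x (Fin.snoc T true) ^ 2 with hD
    have hcast : (fun i : Fin r =>
        ((Fin.snoc c' cr : Fin (r+1) → Kˣ) i.castSucc : K)) = fun i => (c' i : K) := by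
      funext i; simp
    have hb' : (b : K) = C - (cr : K) * D := by
      have step : (b:K) = ∑ T : Fin r → Bool,
          ((-(cr:K)) * (pfisterCoeff r (fun i => (c' i : K)) T * x (Fin.snoc T true) ^ 2)
            + pfisterCoeff r (fun i => (c' i : K)) T * x (Fin.snoc T false) ^ 2) := by
        rw [hb, ← Equiv.sum_comp (snocBoolEquiv r), Fintype.sum_prod_type]
        refine Finset.sum_congr rfl fun T _ => ?_
        rw [Fintype.sum_bool]
        show pfisterCoeff (r + 1) _ (Fin.snoc T true) * x (Fin.snoc T true) ^ 2 +
          pfisterCoeff (r + 1) _ (Fin.snoc T false) * x (Fin.snoc T false) ^ 2 = _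
        simp [snocBoolEquiv, Equiv.coe_fn_mk, pfisterCoeff_snoc, hcast, mul_assoc]
      rw [step, Finset.sum_add_distrib, ← Finset.mul_sum, ← hD, ← hC]
      ring
    by_cases hDz : D = 0
    · -- b = C, represented by the smaller Pfister form
      rw [hDz, mul_zero, sub_zero] at hb'
      obtain ⟨z, hz⟩ := IH c' b (fun T => x (Fin.snoc T false)) (by rw [hb'])
      refine ⟨- appendHom cr z, ?_⟩
      rw [milnorSymbol_snoc_swap, ← appendHom_symbol cr, hz, map_nsmul, smul_neg]
    · set d : Kˣ := Units.mk0 D hDz with hd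
      obtain ⟨zd, hzd⟩ := IH c' d (fun T => x (Fin.snoc T true)) (by rw [Units.val_mk0])
      by_cases hCz : C = 0
      · -- b = -cr * d
        have hbcd : b = (-cr) * d := by
          ext; rw [Units.val_mul, Units.val_neg, hb', hCz, Units.val_mk0]; ring
        refine ⟨- appendHom cr zd, ?_⟩
        rw [hbcd, milnorSymbol_snoc_mul, milnorSymbol_snoc_neg_self, zero_add,
          milnorSymbol_snoc_swap, ← appendHom_symbol cr, hzd, map_nsmul, smul_neg]
      · set cu : Kˣ := Units.mk0 C hCz with hcu
        obtain ⟨zc, hzc⟩ := IH c' cu (fun T => x (Fin.snoc T false)) (by rw [Units.val_mk0])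
        set e : Kˣ := d * cu⁻¹ with he
        set w : Kˣ := b * cu⁻¹ with hw
        have hsum : ((cr * e : Kˣ) : K) + ((w : Kˣ) : K) = 1 := by
          simp only [he, hw, hd, hcu, Units.val_mul, Units.val_inv_eq_inv_val, Units.val_mk0]
          rw [hb']
          field_simp
          ring
        have hbw : b = cu * w := by
          rw [hw, ← mul_assoc, mul_comm cu b, mul_assoc, mul_inv_cancel, mul_one]
        -- first piece : {snoc c cu}
        have piece1 : milnorSymbol (Fin.snoc (Fin.snoc c' cr) cu) =
            2 • (- appendHom cr zc) := by
          rw [milnorSymbol_snoc_swap, ← appendHom_symbol cr, hzc, map_nsmul, smul_neg]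
        -- second piece : {snoc c w}
        have piece2 : milnorSymbol (Fin.snoc (Fin.snoc c' cr) w) =
            2 • (- appendHom w zd + appendHom w zc) := by
          have hcr : cr = (cr * e) * e⁻¹ := by rw [mul_assoc, mul_inv_cancel, mul_one]
          rw [show milnorSymbol (Fin.snoc (Fin.snoc c' cr) w)
              = milnorSymbol (Fin.snoc (Fin.snoc c' ((cr * e) * e⁻¹)) w) from by rw [← hcr],
            milnorSymbol_snoc2_mul, milnorSymbol_snoc_steinberg c' (cr * e) w hsum, zero_add,
            milnorSymbol_snoc2_inv]
          have hesplit : milnorSymbol (Fin.snoc (Fin.snoc c' e) w) =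
              appendHom w (milnorSymbol (Fin.snoc c' d) - milnorSymbol (Fin.snoc c' cu)) := by
            rw [map_sub, appendHom_symbol, appendHom_symbol, he, milnorSymbol_snoc2_mul,
              milnorSymbol_snoc2_inv, sub_eq_add_neg]
          rw [hesplit, hzd, hzc, map_sub, map_nsmul, map_nsmul]
          abel
        refine ⟨- appendHom cr zc + (- appendHom w zd + appendHom w zc), ?_⟩
        rw [hbw, milnorSymbol_snoc_mul, piece1, piece2]
        abel

section Primality

open Polynomial in
/-- a polynomial `γ₀ X² + γ₁` with nonzero coefficients is not a square in `k[X]` (char ≠ 2) -/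
lemma not_sq_poly {k : Type*} [Field k] (h2 : (2 : k) ≠ 0) (γ₀ γ₁ : k)
    (h0 : γ₀ ≠ 0) (h1 : γ₁ ≠ 0) (q : Polynomial k) :
    q ^ 2 ≠ Polynomial.C γ₀ * Polynomial.X ^ 2 + Polynomial.C γ₁ := by
  intro heq
  have hq2 : (q ^ 2).natDegree = 2 := by
    rw [heq, natDegree_add_C, natDegree_C_mul_X_pow 2 _ h0]
  have hdq : q.natDegree = 1 := by
    rw [natDegree_pow] at hq2; omega
  have hq0 : q ≠ 0 := fun h => by simp [h] at hdq
  have hu : q.coeff 1 ≠ 0 := by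
    have := Polynomial.leadingCoeff_ne_zero.mpr hq0
    rwa [Polynomial.leadingCoeff, hdq] at this
  set u := q.coeff 1
  set v := q.coeff 0
  have hqX : q = Polynomial.C u * Polynomial.X + Polynomial.C v :=
    Polynomial.eq_X_add_C_of_natDegree_le_one (le_of_eq hdq)
  rw [hqX] at heq
  have e1 := congrArg (Polynomial.eval 1) heq
  have e2 := congrArg (Polynomial.eval (-1)) heq
  have e0 := congrArg (Polynomial.eval 0) heq
  simp only [Polynomial.eval_pow, Polynomial.eval_add, Polynomial.eval_mul, Polynomial.eval_C,
    Polynomial.eval_X, mul_one, mul_neg, mul_zero, zero_add, one_pow, neg_neg] at e1 e2 e0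
  have hv : v ≠ 0 := by
    intro h
    rw [h] at e0
    simp at e0
    exact h1 e0.symm
  have huv : (2 : k) * (2 : k) * (u * v) = 0 := by linear_combination e1 - e2
  rcases mul_eq_zero.1 huv with h | h
  · exact mul_ne_zero h2 h2 h
  · rcases mul_eq_zero.1 h with h | h
    · exact hu h
    · exact hv h

open MvPolynomial in
/-- a diagonal quadratic form in at least two variables with nonzero coefficients is not a
square in `k[Xs]` (char ≠ 2) -/
lemma not_sq_mv {k : Type*} [Field k] (h2 : (2 : k) ≠ 0) {σ : Type*} [Fintype σ]
    [DecidableEq σ] (γ : σ → k) (hγ : ∀ s, γ s ≠ 0) (S₀ S₁ : σ) (h01 : S₀ ≠ S₁)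
    (y : MvPolynomial σ k) :
    y ^ 2 ≠ ∑ s : σ, C (γ s) * X s ^ 2 := by
  intro heq
  set pt : σ → Polynomial k := fun s =>
    if s = S₀ then Polynomial.X else if s = S₁ then 1 else 0 with hpt
  set χ : MvPolynomial σ k →ₐ[k] Polynomial k := aeval pt with hχ
  have hval : χ (∑ s : σ, C (γ s) * X s ^ 2) =
      Polynomial.C (γ S₀) * Polynomial.X ^ 2 + Polynomial.C (γ S₁) := by
    rw [map_sum]
    have hterm : ∀ s : σ, χ (C (γ s) * X s ^ 2) =
        (if s = S₀ then Polynomial.C (γ S₀) * Polynomial.X ^ 2 else 0) +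
          (if s = S₁ then Polynomial.C (γ S₁) else 0) := by
      intro s
      rw [map_mul, map_pow, aeval_X, algHom_C]
      by_cases hs0 : s = S₀
      · subst hs0
        rw [if_pos rfl, if_neg h01, hpt]
        simp
      · rw [if_neg hs0]
        by_cases hs1 : s = S₁
        · subst hs1
          rw [if_pos rfl, hpt]
          simp [hs0]
        · rw [if_neg hs1, hpt]
          simp [hs0, hs1]
    rw [Finset.sum_congr rfl fun s _ => hterm s, Finset.sum_add_distrib,
      Finset.sum_ite_eq' Finset.univ S₀, Finset.sum_ite_eq' Finset.univ S₁]
    simp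
  exact not_sq_poly h2 (γ S₀) (γ S₁) (hγ S₀) (hγ S₁) (χ y)
    (by rw [← hval, ← heq, map_pow])

end Primality

section Irr

set_option synthInstance.maxHeartbeats 1000000 in
set_option maxHeartbeats 1000000 in
open Polynomial in
lemma irreducible_X_sq_sub {k : Type*} [Field k] (h2 : (2 : k) ≠ 0) {σ : Type*} [Fintype σ]
    [DecidableEq σ] (γ : σ → k) (hγ : ∀ s, γ s ≠ 0) (aN : k) (haN : aN ≠ 0)
    (S₀ S₁ : σ) (h01 : S₀ ≠ S₁) :
    Irreducible ((Polynomial.X : Polynomial (MvPolynomial σ k)) ^ 2 -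
      Polynomial.C (∑ s : σ, MvPolynomial.C (γ s * aN⁻¹) * MvPolynomial.X s ^ 2)) := by
  set g' : MvPolynomial σ k := ∑ s : σ, MvPolynomial.C (γ s * aN⁻¹) * MvPolynomial.X s ^ 2 with hg'
  have hmonic : ((Polynomial.X : Polynomial (MvPolynomial σ k)) ^ 2 - Polynomial.C g').Monic :=
    monic_X_pow_sub_C _ (by norm_num)
  rw [hmonic.irreducible_iff_irreducible_map_fraction_map
    (K := FractionRing (MvPolynomial σ k))]
  rw [Polynomial.map_sub, Polynomial.map_pow, Polynomial.map_X, Polynomial.map_C]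
  apply X_pow_sub_C_irreducible_of_prime Nat.prime_two
  intro b hb
  have hint : IsIntegral (MvPolynomial σ k) b := by
    refine ⟨Polynomial.X ^ 2 - Polynomial.C g', monic_X_pow_sub_C _ (by norm_num), ?_⟩
    simp [Polynomial.eval₂_sub, hb]
  obtain ⟨y, hy⟩ := IsIntegrallyClosed.isIntegral_iff.mp hint
  have hysq : y ^ 2 = g' := by
    apply IsFractionRing.injective (MvPolynomial σ k) (FractionRing (MvPolynomial σ k))
    rw [map_pow, hy, hb]
  exact not_sq_mv h2 (fun s => γ s * aN⁻¹)
    (fun s => mul_ne_zero (hγ s) (inv_ne_zero haN)) S₀ S₁ h01 y hysq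

end Irr

set_option maxHeartbeats 2000000 in
set_option synthInstance.maxHeartbeats 1000000 in
open MvPolynomial in
/-- Proposition `isspl0` of Voevodsky's "On 2-torsion in motivic cohomology": for a field `k`
of characteristic `≠ 2`, `n ≥ 2` (here `n = m+2`) and units `a₁,…,aₙ` of `k`, the polynomial
`f = ⟨⟨a₁,…,a_{n-1}⟩⟩(X₀,…,X_{2^{n-1}-1}) − aₙ·X²_{2^{n-1}}` (the affine equation of the norm
quadric `Q_{a₁,…,aₙ}`, in variables indexed by `(Fin (n-1) → Bool) ⊕ Unit`) generates a prime
ideal, and in the Milnor K-group `K_n^M(L)` of the fraction field `L` of the integral domain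
`A = k[X…]/(f)` the symbol `{a₁,…,aₙ}` is divisible by `2`. -/
theorem milnorSymbol_div_two_over_function_field_of_norm_quadric
    {k : Type u} [Field k] (hchar : ringChar k ≠ 2)
    (m : ℕ) (a : Fin (m + 2) → kˣ) :
    let f : MvPolynomial ((Fin (m + 1) → Bool) ⊕ Unit) k :=
      (∑ S : Fin (m + 1) → Bool,
          C (pfisterCoeff (m + 1) (fun i => (a i.castSucc : k)) S) * X (Sum.inl S) ^ 2) -
        C (a (Fin.last (m + 1)) : k) * X (Sum.inr ()) ^ 2
    (Ideal.span {f}).IsPrime ∧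
      ∀ (L : Type u) [Field L]
        [Algebra (MvPolynomial ((Fin (m + 1) → Bool) ⊕ Unit) k ⧸ Ideal.span {f}) L]
        [IsFractionRing (MvPolynomial ((Fin (m + 1) → Bool) ⊕ Unit) k ⧸ Ideal.span {f}) L],
        ∃ y : MilnorKGroup L (m + 2),
          milnorSymbol (fun i =>
            Units.map ((algebraMap (MvPolynomial ((Fin (m + 1) → Bool) ⊕ Unit) k ⧸
                Ideal.span {f}) L).comp
              ((Ideal.Quotient.mk (Ideal.span {f})).comp MvPolynomial.C)).toMonoidHom
              (a i)) = 2 • y := by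
  intro f
  have h2 : (2 : k) ≠ 0 := Ring.two_ne_zero hchar
  set aN : k := (a (Fin.last (m + 1)) : k) with haNdef
  have haN0 : aN ≠ 0 := Units.ne_zero _
  set γ : (Fin (m + 1) → Bool) → k :=
    fun S => pfisterCoeff (m + 1) (fun i => (a i.castSucc : k)) S with hγdef
  have hγ : ∀ S, γ S ≠ 0 := by
    intro S
    rw [hγdef]
    unfold pfisterCoeff
    exact Finset.prod_ne_zero_iff.mpr fun i _ => neg_ne_zero.mpr (Units.ne_zero _)
  set g' : MvPolynomial (Fin (m + 1) → Bool) k :=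
    ∑ S : Fin (m + 1) → Bool, C (γ S * aN⁻¹) * X S ^ 2 with hg'
  have h01 : (fun _ : Fin (m + 1) => false) ≠ (fun _ => true) := by
    intro h
    exact absurd (congrFun h 0) (by simp)
  have hirr := irreducible_X_sq_sub h2 γ hγ aN haN0 _ _ h01
  rw [← hg'] at hirr
  set e : MvPolynomial ((Fin (m + 1) → Bool) ⊕ Unit) k ≃ₐ[k]
      Polynomial (MvPolynomial (Fin (m + 1) → Bool) k) :=
    (renameEquiv k (Equiv.optionEquivSumPUnit _).symm).trans
      (optionEquivLeft k (Fin (m + 1) → Bool)) with he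
  have eX1 : ∀ S, e (X (Sum.inl S)) = Polynomial.C (X S) := by
    intro S
    rw [he]
    simp [Equiv.optionEquivSumPUnit, optionEquivLeft_X_some]
  have eX2 : e (X (Sum.inr ())) = Polynomial.X := by
    rw [he]
    simp [Equiv.optionEquivSumPUnit, optionEquivLeft_X_none]
  have eC : ∀ r : k, e (C r) = Polynomial.C (C r) := by
    intro r
    rw [he]
    simp [optionEquivLeft_C]
  have hef : e f = Polynomial.C (C (-aN)) * (Polynomial.X ^ 2 - Polynomial.C g') := by
    have key : ∀ S, (C (-aN) : MvPolynomial (Fin (m + 1) → Bool) k) *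
        (C (γ S * aN⁻¹) * X S ^ 2) = -(C (γ S) * X S ^ 2) := by
      intro S
      rw [← mul_assoc, ← C_mul, show -aN * (γ S * aN⁻¹) = -(γ S) from by
        field_simp, map_neg, neg_mul]
    have lhs : e f = (∑ S : Fin (m + 1) → Bool, Polynomial.C (C (γ S) * X S ^ 2)) -
        Polynomial.C (C aN) * Polynomial.X ^ 2 := by
      show e ((∑ S : Fin (m + 1) → Bool, C (γ S) * X (Sum.inl S) ^ 2) -
        C aN * X (Sum.inr ()) ^ 2) = _
      rw [map_sub, map_sum]
      congr 1
      · refine Finset.sum_congr rfl fun S _ => ?_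
        rw [map_mul, map_pow, eX1, eC, ← Polynomial.C_pow, ← Polynomial.C_mul]
      · rw [map_mul, map_pow, eX2, eC]
    have hCneg : (Polynomial.C (C (-aN)) :
        Polynomial (MvPolynomial (Fin (m + 1) → Bool) k)) = - Polynomial.C (C aN) := by
      rw [map_neg, map_neg]
    have hCg : (Polynomial.C (C (-aN)) :
        Polynomial (MvPolynomial (Fin (m + 1) → Bool) k)) * Polynomial.C g' =
        - ∑ S : Fin (m + 1) → Bool, Polynomial.C (C (γ S) * X S ^ 2) := by
      rw [← Polynomial.C_mul, hg', Finset.mul_sum,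
        Finset.sum_congr rfl fun S _ => key S, Finset.sum_neg_distrib, map_neg, map_sum]
    rw [lhs, mul_sub, hCg, hCneg]
    ring
  -- primality
  have hUnit : IsUnit (Polynomial.C (C (-aN)) :
      Polynomial (MvPolynomial (Fin (m + 1) → Bool) k)) := by
    refine IsUnit.map (Polynomial.C.comp (C : k →+* MvPolynomial (Fin (m + 1) → Bool) k)) ?_
    exact (isUnit_iff_ne_zero.mpr (neg_ne_zero.mpr haN0))
  obtain ⟨uu, huu⟩ := hUnit
  have hassoc : Associated (Polynomial.X ^ 2 - Polynomial.C g') (e f) :=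
    ⟨uu, by rw [hef, huu, mul_comm]⟩
  have hprimeEf : Prime (e f) :=
    UniqueFactorizationMonoid.irreducible_iff_prime.mp (hassoc.irreducible hirr)
  have hprimef : Prime f := by
    rw [← MulEquiv.prime_iff e]
    exact hprimeEf
  have hspan : (Ideal.span {f}).IsPrime :=
    (Ideal.span_singleton_prime hprimef.ne_zero).mpr hprimef
  refine ⟨hspan, ?_⟩
  have hXnotmem : X (Sum.inr ()) ∉ Ideal.span {f} := by
    intro hmem
    rw [Ideal.mem_span_singleton] at hmem
    have hdvd1 : e f ∣ e (X (Sum.inr ())) := map_dvd e hmem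
    rw [hef, eX2] at hdvd1
    have hdvd : (Polynomial.X ^ 2 - Polynomial.C g') ∣
        (Polynomial.X : Polynomial (MvPolynomial (Fin (m + 1) → Bool) k)) :=
      dvd_trans (dvd_mul_left _ _) hdvd1
    have hle := Polynomial.natDegree_le_of_dvd hdvd Polynomial.X_ne_zero
    rw [Polynomial.natDegree_X_pow_sub_C, Polynomial.natDegree_X] at hle
    omega
  intro L _ _ _
  haveI := hspan
  set Θ : MvPolynomial ((Fin (m + 1) → Bool) ⊕ Unit) k →+* L :=
    (algebraMap (MvPolynomial ((Fin (m + 1) → Bool) ⊕ Unit) k ⧸ Ideal.span {f}) L).comp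
      (Ideal.Quotient.mk (Ideal.span {f})) with hΘ
  set ψ : k →+* L := Θ.comp (C : k →+* MvPolynomial ((Fin (m + 1) → Bool) ⊕ Unit) k) with hψ
  set u : Fin (m + 2) → Lˣ := fun i => Units.map ψ.toMonoidHom (a i) with hu
  have hxiI : Θ (X (Sum.inr ())) ≠ 0 := by
    intro h0
    have hmk : Ideal.Quotient.mk (Ideal.span {f}) (X (Sum.inr ())) = 0 := by
      apply IsFractionRing.injective
        (MvPolynomial ((Fin (m + 1) → Bool) ⊕ Unit) k ⧸ Ideal.span {f}) L
      rw [map_zero]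
      exact h0
    exact hXnotmem (Ideal.Quotient.eq_zero_iff_mem.mp hmk)
  have hrel : ∑ S : Fin (m + 1) → Bool, ψ (γ S) * Θ (X (Sum.inl S)) ^ 2 =
      ψ aN * Θ (X (Sum.inr ())) ^ 2 := by
    have h0 : Θ ((∑ S : Fin (m + 1) → Bool, C (γ S) * X (Sum.inl S) ^ 2) -
        C aN * X (Sum.inr ()) ^ 2) = 0 := by
      show Θ f = 0
      rw [hΘ, RingHom.comp_apply, Ideal.Quotient.eq_zero_iff_mem.mpr
        (Ideal.subset_span (Set.mem_singleton f)), map_zero]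
    rw [map_sub, map_sum, sub_eq_zero] at h0
    calc ∑ S : Fin (m + 1) → Bool, ψ (γ S) * Θ (X (Sum.inl S)) ^ 2
        = ∑ S : Fin (m + 1) → Bool, Θ (C (γ S) * X (Sum.inl S) ^ 2) :=
          Finset.sum_congr rfl fun S _ => by rw [map_mul, map_pow]; rfl
      _ = Θ (C aN * X (Sum.inr ()) ^ 2) := h0
      _ = ψ aN * Θ (X (Sum.inr ())) ^ 2 := by rw [map_mul, map_pow]; rfl
  set xiI : L := Θ (X (Sum.inr ())) with hxiIdef
  set x : (Fin (m + 1) → Bool) → L := fun S => Θ (X (Sum.inl S)) * xiI⁻¹ with hx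
  have hpc : ∀ S, pfisterCoeff (m + 1)
      (fun i => ((u i.castSucc : Lˣ) : L)) S = ψ (γ S) := by
    intro S
    rw [hγdef]
    unfold pfisterCoeff
    rw [map_prod]
    refine Finset.prod_congr rfl fun i _ => ?_
    rw [map_neg]
    rfl
  have hrep : ((u (Fin.last (m + 1)) : Lˣ) : L) =
      ∑ S : Fin (m + 1) → Bool, pfisterCoeff (m + 1)
        (fun i => ((u i.castSucc : Lˣ) : L)) S * x S ^ 2 := by
    have step1 : ∑ S : Fin (m + 1) → Bool, pfisterCoeff (m + 1)
        (fun i => ((u i.castSucc : Lˣ) : L)) S * x S ^ 2 =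
        (∑ S : Fin (m + 1) → Bool, ψ (γ S) * Θ (X (Sum.inl S)) ^ 2) * (xiI⁻¹) ^ 2 := by
      rw [Finset.sum_mul]
      refine Finset.sum_congr rfl fun S _ => ?_
      rw [hpc, hx]
      ring
    rw [step1, hrel]
    have : ((u (Fin.last (m + 1)) : Lˣ) : L) = ψ aN := rfl
    rw [this]
    field_simp
  obtain ⟨z, hz⟩ := represented_symbol_div_two (m + 1)
    (fun i => u i.castSucc) (u (Fin.last (m + 1))) x hrep
  refine ⟨z, ?_⟩
  rw [← hz]
  congr 1
  funext i
  refine Fin.lastCases ?_ (fun j => ?_) i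
  · rw [Fin.snoc_last]
    rfl
  · rw [Fin.snoc_castSucc]
    rfl
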